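/- Let O and N be points in the Euclidean plane and R > 0 with dist(O,N) = R/2. Then there exist infinitely many nondegenerate triangles ABC with circumcenter O, circumradius R, and nine-point center N (i.e., with dist(O,A) = dist(O,B) = dist(O,C) = R and midpoint(O, orthocenter(ABC)) = N); moreover every such triangle is right-angled, and its right-angle vertex is the internal tangency point T = O + 2·(N − O) of the circumcircle and the Euler circle. -/

import Mathlib

open EuclideanGeometry Real

section Helpers

local notation "E2" => EuclideanSpace ℝ (Fin 2)
local notation "⟪" x ", " y "⟫" => @inner ℝ _ _ x y

lemma centroid3 (A B C : E2) :
    (Finset.univ : Finset (Fin 3)).centroid ℝ ![A,B,C] = (3:ℝ)⁻¹ • (A + B + C) := by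
  simp only [Finset.centroid_def, Finset.affineCombination_apply, Finset.weightedVSubOfPoint_apply,
    Fin.sum_univ_three, Finset.centroidWeights_apply, vsub_eq_sub, vadd_eq_add,
    Matrix.cons_val_zero, Matrix.cons_val_one, Matrix.head_cons, Matrix.cons_val_two,
    Matrix.tail_cons, Finset.card_univ, Fintype.card_fin]
  push_cast
  module

lemma ortho_eq (O A B C : E2) (h : AffineIndependent ℝ ![A, B, C]) {R : ℝ}
    (hA : dist O A = R) (hB : dist O B = R) (hC : dist O C = R) :
    (Affine.Triangle.orthocenter ⟨![A, B, C], h⟩) = A + B + C - (2:ℝ) • O := by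
  set t : Affine.Triangle ℝ E2 := ⟨![A, B, C], h⟩
  have hO : O = t.circumcenter := by
    apply t.eq_circumcenter_of_dist_eq (r := R)
    · rw [h.affineSpan_eq_top_iff_card_eq_finrank_add_one.2 (by simp [finrank_euclideanSpace_fin])]
      trivial
    · intro i
      fin_cases i <;> simp only [t, Matrix.cons_val_zero, Matrix.cons_val_one, Matrix.head_cons,
        Matrix.cons_val_two, Matrix.tail_cons, dist_comm] <;> assumption
  rw [t.orthocenter_eq_smul_vsub_vadd_circumcenter, ← hO,
    show (Finset.univ : Finset (Fin 3)).centroid ℝ t.points = (3:ℝ)⁻¹ • (A + B + C) from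
      centroid3 A B C]
  simp only [vsub_eq_sub, vadd_eq_add]
  module

lemma midpoint_two_smul (x y z : E2) (h : midpoint ℝ x y = z) : y = (2:ℝ) • z - x := by
  have := congrArg (fun w => (2:ℝ) • w) h
  simp only [midpoint_eq_smul_add, smul_smul] at this
  rw [show (2:ℝ) * ⅟2 = 1 by norm_num, one_smul] at this
  rw [← this]; abel

lemma ortho_exists (d : E2) : ∃ w : E2, ⟪d, w⟫ = 0 ∧ ‖w‖ = ‖d‖ := by
  refine ⟨(WithLp.equiv 2 (Fin 2 → ℝ)).symm ![-(d 1), d 0], ?_, ?_⟩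
  · simp [PiLp.inner_apply, Fin.sum_univ_two, RCLike.inner_apply, PiLp.toLp_apply]
    ring
  · have h1 : ‖(WithLp.equiv 2 (Fin 2 → ℝ)).symm ![-(d 1), d 0]‖^2 = ‖d‖^2 := by
      rw [← real_inner_self_eq_norm_sq, ← real_inner_self_eq_norm_sq, PiLp.inner_apply, PiLp.inner_apply]
      simp [PiLp.inner_apply, Fin.sum_univ_two, RCLike.inner_apply, PiLp.toLp_apply]
      ring
    rw [← Real.sqrt_sq (norm_nonneg _), h1, Real.sqrt_sq (norm_nonneg _)]

section
variable (O N : E2) (R : ℝ)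

lemma exists_part (hR : 0 < R) (hd : dist O N = R / 2) :
    {s : Set E2 |
        ∃ (A B C : E2) (h : AffineIndependent ℝ ![A, B, C]),
          s = {A, B, C} ∧ dist O A = R ∧ dist O B = R ∧ dist O C = R ∧
            midpoint ℝ O (Affine.Triangle.orthocenter ⟨![A, B, C], h⟩) = N}.Infinite := by
  set d : E2 := (2:ℝ) • (N - O) with hdef
  have hnd : ‖d‖ = R := by
    rw [hdef, norm_smul, show ‖N - O‖ = R/2 by rw [← dist_eq_norm, dist_comm]; exact hd]
    simp; ring
  obtain ⟨w, hdw, hw⟩ := ortho_exists d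
  rw [hnd] at hw
  have hwd : ⟪w, d⟫ = 0 := by rw [real_inner_comm]; exact hdw
  have hdd : ⟪d, d⟫ = R^2 := by rw [real_inner_self_eq_norm_sq, hnd]
  have hww : ⟪w, w⟫ = R^2 := by rw [real_inner_self_eq_norm_sq, hw]
  set u : ℝ → E2 := fun t => cos t • d + sin t • w with hu
  have hdu : ∀ t, ⟪d, u t⟫ = R^2 * cos t := by
    intro t
    simp only [hu, inner_add_right, real_inner_smul_right, hdd, hdw]
    ring
  have hwu : ∀ t, ⟪w, u t⟫ = R^2 * sin t := by
    intro t
    simp only [hu, inner_add_right, real_inner_smul_right, hwd, hww]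
    ring
  have hnu : ∀ t, ‖u t‖ = R := by
    intro t
    have h2 : ‖u t‖^2 = R^2 := by
      rw [← real_inner_self_eq_norm_sq]
      simp only [hu, inner_add_left, inner_add_right, real_inner_smul_left,
        real_inner_smul_right, hdd, hww, hdw, hwd]
      have := sin_sq_add_cos_sq t
      nlinarith
    rw [← Real.sqrt_sq (norm_nonneg _), h2, Real.sqrt_sq hR.le]
  have hR2 : (R:ℝ)^2 ≠ 0 := by positivity
  -- affine independence
  have haff : ∀ t ∈ Set.Ioo (0:ℝ) π, AffineIndependent ℝ ![O + d, O + u t, O - u t] := by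
    intro t ht
    have hsin : 0 < sin t := Real.sin_pos_of_pos_of_lt_pi ht.1 ht.2
    rw [affineIndependent_iff_not_collinear]
    intro hcol
    rw [collinear_iff_of_mem (Set.mem_range.2 ⟨0, rfl⟩ :
      (O + d) ∈ Set.range ![O + d, O + u t, O - u t])] at hcol
    obtain ⟨vv, hvv⟩ := hcol
    obtain ⟨rB, hrB⟩ := hvv _ (Set.mem_range.2 ⟨1, rfl⟩)
    obtain ⟨rC, hrC⟩ := hvv _ (Set.mem_range.2 ⟨2, rfl⟩)
    rw [Matrix.cons_val_one, Matrix.cons_val_zero, vadd_eq_add] at hrB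
    rw [Matrix.cons_val_two, Matrix.tail_cons, Matrix.head_cons, vadd_eq_add] at hrC
    have e1 : u t - d = rB • vv := by
      rw [show u t - d = O + u t - (O + d) from by abel, hrB]; abel
    have e2 : -u t - d = rC • vv := by
      rw [show -u t - d = O - u t - (O + d) from by abel, hrC]; abel
    have iB : R^2 * sin t = rB * ⟪w, vv⟫ := by
      have h' := congrArg (fun x => ⟪w, x⟫) e1
      rw [inner_sub_right, hwu, hwd, sub_zero, real_inner_smul_right] at h'
      exact h'
    have e3 : (-(2:ℝ)) • d = (rB + rC) • vv := by
      rw [add_smul, ← e1, ← e2]; module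
    have hl : ⟪w, (-(2:ℝ)) • d⟫ = (0:ℝ) := by rw [real_inner_smul_right, hwd, mul_zero]
    have i3 : (0:ℝ) = (rB + rC) * ⟪w, vv⟫ := by
      have h' := congrArg (fun x => ⟪w, x⟫) e3
      rw [← hl, h', real_inner_smul_right]
    have hwv : ⟪w, vv⟫ ≠ 0 := by
      intro h0
      rw [h0, mul_zero] at iB
      exact (mul_pos (pow_pos hR 2) hsin).ne' iB
    have hrsum : rB + rC = 0 := by
      rcases mul_eq_zero.mp i3.symm with h | h
      · exact h
      · exact absurd h hwv
    have hd0 : d = 0 := by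
      have : (-(2:ℝ)) • d = 0 := by rw [e3, hrsum, zero_smul]
      simpa using this
    rw [hd0, norm_zero] at hnd
    exact absurd hnd.symm (ne_of_gt hR)
  -- the map
  set f : ℝ → Set E2 := fun t => {O + d, O + u t, O - u t} with hf
  have hmaps : Set.MapsTo f (Set.Ioo 0 π)
      {s : Set E2 |
        ∃ (A B C : E2) (h : AffineIndependent ℝ ![A, B, C]),
          s = {A, B, C} ∧ dist O A = R ∧ dist O B = R ∧ dist O C = R ∧
            midpoint ℝ O (Affine.Triangle.orthocenter ⟨![A, B, C], h⟩) = N} := by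
    intro t ht
    refine ⟨O + d, O + u t, O - u t, haff t ht, rfl, ?_, ?_, ?_, ?_⟩
    · rw [dist_eq_norm, show O - (O + d) = -d from by abel, norm_neg, hnd]
    · rw [dist_eq_norm, show O - (O + u t) = -(u t) from by abel, norm_neg, hnu]
    · rw [dist_eq_norm, show O - (O - u t) = u t from by abel, hnu]
    · rw [ortho_eq O _ _ _ (haff t ht)
        (by rw [dist_eq_norm, show O - (O + d) = -d from by abel, norm_neg, hnd])
        (by rw [dist_eq_norm, show O - (O + u t) = -(u t) from by abel, norm_neg, hnu])
        (by rw [dist_eq_norm, show O - (O - u t) = u t from by abel, hnu])]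
      rw [show O + d + (O + u t) + (O - u t) - (2:ℝ) • O = O + d from by module]
      rw [midpoint_eq_smul_add, hdef, show O + (O + (2:ℝ) • (N - O)) = (2:ℝ) • N from by module,
        smul_smul, show ((⅟2 : ℝ) * 2) = 1 from by norm_num, one_smul]
  have hinj : Set.InjOn f (Set.Ioo 0 π) := by
    intro t ht t' ht' heq
    have hsin : 0 < sin t := Real.sin_pos_of_pos_of_lt_pi ht.1 ht.2
    have hsin' : 0 < sin t' := Real.sin_pos_of_pos_of_lt_pi ht'.1 ht'.2
    have hm : O + u t ∈ f t' := by
      rw [← heq]; simp [hf]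
    simp only [hf, Set.mem_insert_iff, Set.mem_singleton_iff] at hm
    rcases hm with hm | hm | hm
    · have : u t = d := by
        have := congrArg (fun x => x - O) hm; simpa using this
      have h' := congrArg (fun x => ⟪w, x⟫) this
      rw [hwu, hwd] at h'
      exact (mul_pos (pow_pos hR 2) hsin).ne' h' |>.elim
    · have huu : u t = u t' := by
        have := congrArg (fun x => x - O) hm; simpa using this
      have hcos : cos t = cos t' := by
        have := congrArg (fun x => ⟪d, x⟫) huu
        simp only [hdu] at this
        exact mul_left_cancel₀ hR2 this
      exact Real.injOn_cos ⟨ht.1.le, ht.2.le⟩ ⟨ht'.1.le, ht'.2.le⟩ hcos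
    · have huu : u t = -u t' := by
        have := congrArg (fun x => x - O) hm; simpa using this
      have h' := congrArg (fun x => ⟪w, x⟫) huu
      rw [hwu, inner_neg_right, hwu] at h'
      have p1 := mul_pos (pow_pos hR 2) hsin
      have p2 := mul_pos (pow_pos hR 2) hsin'
      linarith
  exact ((Set.Ioo_infinite Real.pi_pos).image hinj).mono (Set.mapsTo_iff_image_subset.mp hmaps)
end

lemma right_part (O N : E2) (R : ℝ) (hR : 0 < R) (hd : dist O N = R / 2)
    (A B C : E2) (h : AffineIndependent ℝ ![A, B, C])
    (hA : dist O A = R) (hB : dist O B = R) (hC : dist O C = R)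
    (hmid : midpoint ℝ O (Affine.Triangle.orthocenter ⟨![A, B, C], h⟩) = N) :
    (∠ B A C = π / 2 ∧ A = O + (2 : ℝ) • (N - O)) ∨
      (∠ A B C = π / 2 ∧ B = O + (2 : ℝ) • (N - O)) ∨
      (∠ B C A = π / 2 ∧ C = O + (2 : ℝ) • (N - O)) := by
  set a := A - O with ha
  set b := B - O with hb
  set c := C - O with hc
  have hna : ‖a‖ = R := by rw [ha, ← dist_eq_norm, dist_comm]; exact hA
  have hnb : ‖b‖ = R := by rw [hb, ← dist_eq_norm, dist_comm]; exact hB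
  have hnc : ‖c‖ = R := by rw [hc, ← dist_eq_norm, dist_comm]; exact hC
  have haa : ⟪a, a⟫ = R^2 := by rw [real_inner_self_eq_norm_sq, hna]
  have hbb : ⟪b, b⟫ = R^2 := by rw [real_inner_self_eq_norm_sq, hnb]
  have hcc : ⟪c, c⟫ = R^2 := by rw [real_inner_self_eq_norm_sq, hnc]
  have hH : A + B + C - (2:ℝ) • O = (2:ℝ) • N - O := by
    rw [← ortho_eq O A B C h hA hB hC]
    exact midpoint_two_smul _ _ _ hmid
  have habc : a + b + c = (2:ℝ) • (N - O) := by
    rw [ha, hb, hc, show A - O + (B - O) + (C - O) = A + B + C - (2:ℝ) • O - O by module, hH]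
    module
  have hnsum : ‖a + b + c‖ = R := by
    rw [habc, norm_smul, show ‖N - O‖ = R/2 by rw [← dist_eq_norm, dist_comm]; exact hd]
    simp; ring
  have hsum2 : ⟪a+b+c, a+b+c⟫ = R^2 := by rw [real_inner_self_eq_norm_sq, hnsum]
  simp only [inner_add_left, inner_add_right] at hsum2
  have hS : ⟪a,b⟫ + ⟪a,c⟫ + ⟪b,c⟫ = -R^2 := by
    linarith [hsum2, real_inner_comm a b, real_inner_comm a c, real_inner_comm b c, haa, hbb, hcc]
  have h01 : ⟪b+c, a+c⟫ = 0 := by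
    simp only [inner_add_left, inner_add_right]
    linarith [hS, real_inner_comm a b, real_inner_comm a c, real_inner_comm b c, hcc]
  have h02 : ⟪b+c, a+b⟫ = 0 := by
    simp only [inner_add_left, inner_add_right]
    linarith [hS, real_inner_comm a b, real_inner_comm a c, real_inner_comm b c, hbb]
  have h12 : ⟪a+c, a+b⟫ = 0 := by
    simp only [inner_add_left, inner_add_right]
    linarith [hS, real_inner_comm a b, real_inner_comm a c, real_inner_comm b c, haa]
  set v : Fin 3 → E2 := ![b + c, a + c, a + b] with hv
  have hzero : b + c = 0 ∨ a + c = 0 ∨ a + b = 0 := by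
    by_contra hcon
    push_neg at hcon
    obtain ⟨h0, h1, h2⟩ := hcon
    have hnz : ∀ i, v i ≠ 0 := by
      intro i; fin_cases i <;> [exact h0; exact h1; exact h2]
    have horth : ∀ i j, i ≠ j → ⟪v i, v j⟫ = 0 := by
      intro i j hij
      fin_cases i <;> fin_cases j <;>
        simp only [hv, Matrix.cons_val_zero, Matrix.cons_val_one, Matrix.head_cons,
          Matrix.cons_val_two, Matrix.tail_cons, Fin.isValue] <;>
        first
          | exact absurd rfl hij
          | exact h01 | exact h02 | exact h12
          | (rw [real_inner_comm]; first | exact h01 | exact h02 | exact h12)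
    have hli := linearIndependent_of_ne_zero_of_inner_eq_zero hnz horth
    have hcard := hli.fintype_card_le_finrank
    rw [finrank_euclideanSpace_fin] at hcard
    simp at hcard
  rcases hzero with h0 | h1 | h2
  · left
    have f1 : ⟪a, b⟫ + ⟪a, c⟫ = 0 := by
      have := congrArg (fun y => ⟪a, y⟫) h0
      simpa [inner_add_right] using this
    have f2 : ⟪b, b⟫ + ⟪b, c⟫ = 0 := by
      have := congrArg (fun y => ⟪b, y⟫) h0
      simpa [inner_add_right] using this
    refine ⟨?_, ?_⟩
    · rw [EuclideanGeometry.angle, ← InnerProductGeometry.inner_eq_zero_iff_angle_eq_pi_div_two]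
      rw [show (B -ᵥ A : E2) = b - a from by simp only [vsub_eq_sub, ha, hb]; abel,
        show (C -ᵥ A : E2) = c - a from by simp only [vsub_eq_sub, ha, hc]; abel]
      simp only [inner_sub_left, inner_sub_right]
      linarith [real_inner_comm a b, real_inner_comm a c, real_inner_comm b c, haa, hbb]
    · have hA2 : a = (2:ℝ) • (N - O) := by
        rw [← habc, show a + b + c = a + (b + c) from by abel, h0, add_zero]
      rw [show A = O + a from by rw [ha]; abel, hA2]
  · right; left
    have f1 : ⟪a, a⟫ + ⟪a, c⟫ = 0 := by
      have := congrArg (fun y => ⟪a, y⟫) h1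
      simpa [inner_add_right] using this
    have f2 : ⟪b, a⟫ + ⟪b, c⟫ = 0 := by
      have := congrArg (fun y => ⟪b, y⟫) h1
      simpa [inner_add_right] using this
    refine ⟨?_, ?_⟩
    · rw [EuclideanGeometry.angle, ← InnerProductGeometry.inner_eq_zero_iff_angle_eq_pi_div_two]
      rw [show (A -ᵥ B : E2) = a - b from by simp only [vsub_eq_sub, ha, hb]; abel,
        show (C -ᵥ B : E2) = c - b from by simp only [vsub_eq_sub, hb, hc]; abel]
      simp only [inner_sub_left, inner_sub_right]
      linarith [real_inner_comm a b, real_inner_comm a c, real_inner_comm b c, haa, hbb]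
    · have hB2 : b = (2:ℝ) • (N - O) := by
        rw [← habc, show a + b + c = b + (a + c) from by abel, h1, add_zero]
      rw [show B = O + b from by rw [hb]; abel, hB2]
  · right; right
    have f1 : ⟪a, a⟫ + ⟪a, b⟫ = 0 := by
      have := congrArg (fun y => ⟪a, y⟫) h2
      simpa [inner_add_right] using this
    have f2 : ⟪c, a⟫ + ⟪c, b⟫ = 0 := by
      have := congrArg (fun y => ⟪c, y⟫) h2
      simpa [inner_add_right] using this
    refine ⟨?_, ?_⟩
    · rw [EuclideanGeometry.angle, ← InnerProductGeometry.inner_eq_zero_iff_angle_eq_pi_div_two]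
      rw [show (B -ᵥ C : E2) = b - c from by simp only [vsub_eq_sub, hb, hc]; abel,
        show (A -ᵥ C : E2) = a - c from by simp only [vsub_eq_sub, ha, hc]; abel]
      simp only [inner_sub_left, inner_sub_right]
      linarith [real_inner_comm a b, real_inner_comm a c, real_inner_comm b c, haa, hcc]
    · have hC2 : c = (2:ℝ) • (N - O) := by
        rw [← habc, show a + b + c = c + (a + b) from by abel, h2, add_zero]
      rw [show C = O + c from by rw [hc]; abel, hC2]

end Helpers

/-- If `dist O N = R/2`, there are infinitely many (unordered) triangles with circumcenter
`O`, circumradius `R` and nine-point center `N`; moreover every such triangle is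
right-angled, with its right-angle vertex at the internal tangency point
`T = O + 2 • (N - O)` of the circumcircle and the Euler circle. -/
theorem infinite_triangles_sharing_circumcircle_euler_circle_right
    (O N : EuclideanSpace ℝ (Fin 2)) (R : ℝ) (hR : 0 < R) (hd : dist O N = R / 2) :
    {s : Set (EuclideanSpace ℝ (Fin 2)) |
        ∃ (A B C : EuclideanSpace ℝ (Fin 2)) (h : AffineIndependent ℝ ![A, B, C]),
          s = {A, B, C} ∧ dist O A = R ∧ dist O B = R ∧ dist O C = R ∧
            midpoint ℝ O (Affine.Triangle.orthocenter ⟨![A, B, C], h⟩) = N}.Infinite ∧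
      ∀ (A B C : EuclideanSpace ℝ (Fin 2)) (h : AffineIndependent ℝ ![A, B, C]),
        dist O A = R → dist O B = R → dist O C = R →
        midpoint ℝ O (Affine.Triangle.orthocenter ⟨![A, B, C], h⟩) = N →
        (∠ B A C = π / 2 ∧ A = O + (2 : ℝ) • (N - O)) ∨
          (∠ A B C = π / 2 ∧ B = O + (2 : ℝ) • (N - O)) ∨
          (∠ B C A = π / 2 ∧ C = O + (2 : ℝ) • (N - O)) := by
  exact ⟨exists_part O N R hR hd,
    fun A B C h hA hB hC hmid => right_part O N R hR hd A B C h hA hB hC hmid⟩
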